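/- √2 = e^{iπ/4} + e^{−iπ/4} belongs to the subring ℤ[i, 1/√2] of ℂ, but √2 does not belong to the subring ℤ[1/2]. -/

import Mathlib

open Real

/-- `√2 = e^{iπ/4} + e^{−iπ/4}` belongs to `ℤ[i, 1/√2]` but not to `ℤ[1/2]`. -/
theorem sqrt_two_mem_counterexample :
    (Real.sqrt 2 : ℂ) =
        Complex.exp (((π / 4 : ℝ) : ℂ) * Complex.I) +
          Complex.exp (((-(π / 4) : ℝ) : ℂ) * Complex.I) ∧
    (Real.sqrt 2 : ℂ) ∈ Subring.closure ({Complex.I, ((Real.sqrt 2 : ℂ))⁻¹} : Set ℂ) ∧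
    (Real.sqrt 2 : ℂ) ∉ Subring.closure ({(1 / 2 : ℂ)} : Set ℂ) := by
  refine ⟨?_, ?_, ?_⟩
  · have h : Complex.exp (((π / 4 : ℝ) : ℂ) * Complex.I) +
        Complex.exp (((-(π / 4) : ℝ) : ℂ) * Complex.I) = 2 * Complex.cos ((π / 4 : ℝ) : ℂ) := by
      rw [Complex.two_cos]
      push_cast
      ring_nf
    rw [h, ← Complex.ofReal_cos, Real.cos_pi_div_four]
    push_cast
    ring
  · have h2 : (Real.sqrt 2 : ℂ) = 2 * ((Real.sqrt 2 : ℂ))⁻¹ := by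
      have hne : (Real.sqrt 2 : ℂ) ≠ 0 := by
        simp only [ne_eq, Complex.ofReal_eq_zero]
        positivity
      field_simp
      norm_cast
      rw [Real.sq_sqrt (by norm_num : (0:ℝ) ≤ 2)]
    have hi : ((Real.sqrt 2 : ℂ))⁻¹ ∈ Subring.closure ({Complex.I, ((Real.sqrt 2 : ℂ))⁻¹} : Set ℂ) :=
      Subring.subset_closure (by simp)
    have h2m : (2:ℂ) ∈ Subring.closure ({Complex.I, ((Real.sqrt 2 : ℂ))⁻¹} : Set ℂ) := by
      rw [(by norm_num : (2:ℂ) = 1 + 1)]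
      exact add_mem (one_mem _) (one_mem _)
    have := mul_mem h2m hi
    rwa [← h2] at this
  · intro hmem
    have hle : Subring.closure ({(1 / 2 : ℂ)} : Set ℂ) ≤ (Rat.castHom ℂ).range := by
      apply Subring.closure_le.2
      intro x hx
      rw [Set.mem_singleton_iff] at hx
      subst hx
      exact ⟨(1/2 : ℚ), by rw [map_div₀]; norm_num⟩
    obtain ⟨q, hq⟩ := hle hmem
    rw [Rat.coe_castHom] at hq
    apply irrational_sqrt_two
    exact ⟨q, by exact_mod_cast hq⟩
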